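/- Let ξ₁,…,ξ_k be independent real random variables with E[ξᵢ] = 0 and E[|ξᵢ|^a] < ∞ for some a ∈ [1,2]. Then E[|Σᵢ ξᵢ|^a] ≤ 2·Σᵢ E[|ξᵢ|^a]. -/

import Mathlib

open MeasureTheory ProbabilityTheory

namespace VBE

noncomputable def phi (q t : ℝ) : ℝ := Real.sign t * |t| ^ q

lemma phi_zero (q : ℝ) : phi q 0 = 0 := by simp [phi, Real.sign_zero]

lemma phi_of_pos {q t : ℝ} (ht : 0 < t) : phi q t = t ^ q := by
  rw [phi, Real.sign_of_pos ht, abs_of_pos ht, one_mul]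

lemma phi_of_nonneg {q t : ℝ} (hq : q ≠ 0) (ht : 0 ≤ t) : phi q t = t ^ q := by
  rcases ht.eq_or_lt with rfl | h
  · simp [phi_zero, Real.zero_rpow hq]
  · exact phi_of_pos h

lemma phi_neg (q t : ℝ) : phi q (-t) = - phi q t := by
  simp [phi, Real.sign_neg, abs_neg, neg_mul]

lemma phi_of_nonpos {q t : ℝ} (hq : q ≠ 0) (ht : t ≤ 0) : phi q t = -((-t) ^ q) := by
  have : phi q (-(-t)) = - phi q (-t) := phi_neg q (-t)
  rw [neg_neg] at this
  rw [this, phi_of_nonneg hq (neg_nonneg.2 ht)]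

lemma rpow_add_le {q x y : ℝ} (hq0 : 0 ≤ q) (hq1 : q ≤ 1) (hx : 0 ≤ x) (hy : 0 ≤ y) :
    (x + y) ^ q ≤ x ^ q + y ^ q := by
  have h := NNReal.rpow_add_le_add_rpow x.toNNReal y.toNNReal hq0 hq1
  have h2 : ((x.toNNReal + y.toNNReal : NNReal) : ℝ) = x + y := by
    simp [Real.coe_toNNReal, hx, hy]
  calc (x + y) ^ q = (((x.toNNReal + y.toNNReal : NNReal) : ℝ)) ^ q := by rw [h2]
    _ = (((x.toNNReal + y.toNNReal : NNReal) ^ q : NNReal) : ℝ) := by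
        rw [NNReal.coe_rpow]
    _ ≤ (((x.toNNReal ^ q + y.toNNReal ^ q : NNReal)) : ℝ) := by exact_mod_cast h
    _ = x ^ q + y ^ q := by
        push_cast
        rw [Real.coe_toNNReal _ hx, Real.coe_toNNReal _ hy]

lemma phi_holder {q : ℝ} (hq0 : 0 < q) (hq1 : q ≤ 1) (u v : ℝ) :
    |phi q u - phi q v| ≤ 2 * |u - v| ^ q := by
  have habs : ∀ w : ℝ, 0 ≤ |w| ^ q := fun w => Real.rpow_nonneg (abs_nonneg w) q
  -- same-sign sorted case
  have same : ∀ u v : ℝ, 0 ≤ v → v ≤ u → |phi q u - phi q v| ≤ 2 * |u - v| ^ q := by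
    intro u v hv hvu
    have hu : 0 ≤ u := hv.trans hvu
    rw [phi_of_nonneg hq0.ne' hu, phi_of_nonneg hq0.ne' hv,
      abs_of_nonneg (sub_nonneg.2 (Real.rpow_le_rpow hv hvu hq0.le)),
      abs_of_nonneg (sub_nonneg.2 hvu)]
    have h1 : u ^ q ≤ (u - v) ^ q + v ^ q := by
      have := rpow_add_le hq0.le hq1 (sub_nonneg.2 hvu) hv
      rwa [sub_add_cancel] at this
    have h2 : 0 ≤ (u - v) ^ q := Real.rpow_nonneg (sub_nonneg.2 hvu) q
    linarith
  -- opposite-sign case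
  have opp : ∀ u v : ℝ, 0 ≤ u → v ≤ 0 → |phi q u - phi q v| ≤ 2 * |u - v| ^ q := by
    intro u v hu hv
    have huv : (0:ℝ) ≤ u - v := by linarith
    rw [phi_of_nonneg hq0.ne' hu, phi_of_nonpos hq0.ne' hv, sub_neg_eq_add,
      abs_of_nonneg (add_nonneg (Real.rpow_nonneg hu q) (Real.rpow_nonneg (neg_nonneg.2 hv) q)),
      abs_of_nonneg huv]
    have h1 : u ^ q ≤ (u - v) ^ q := Real.rpow_le_rpow hu (by linarith) hq0.le
    have h2 : (-v) ^ q ≤ (u - v) ^ q :=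
      Real.rpow_le_rpow (neg_nonneg.2 hv) (by linarith) hq0.le
    linarith
  -- nonneg-u case
  have key : ∀ u v : ℝ, 0 ≤ u → |phi q u - phi q v| ≤ 2 * |u - v| ^ q := by
    intro u v hu
    rcases le_total 0 v with hv | hv
    · rcases le_total v u with h | h
      · exact same u v hv h
      · rw [abs_sub_comm, abs_sub_comm u v]
        exact same v u hu h
    · exact opp u v hu hv
  rcases le_total 0 u with hu | hu
  · exact key u v hu
  · have h := key (-u) (-v) (neg_nonneg.2 hu)
    rw [phi_neg, phi_neg] at h
    have e1 : |-phi q u - -phi q v| = |phi q u - phi q v| := by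
      rw [show -phi q u - -phi q v = -(phi q u - phi q v) by ring, abs_neg]
    have e2 : |(-u) - (-v)| = |u - v| := by
      rw [show (-u) - (-v) = -(u - v) by ring, abs_neg]
    rwa [e1, e2] at h

lemma phi_continuous {q : ℝ} (hq0 : 0 < q) (hq1 : q ≤ 1) : Continuous (phi q) := by
  rw [continuous_iff_continuousAt]
  intro t0
  rw [ContinuousAt, tendsto_iff_dist_tendsto_zero]
  refine squeeze_zero (g := fun t => 2 * |t - t0| ^ q) (fun t => dist_nonneg)
    (fun t => by rw [Real.dist_eq]; exact phi_holder hq0 hq1 t t0) ?_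
  have h1 : Filter.Tendsto (fun t : ℝ => |t - t0|) (nhds t0) (nhds 0) := by
    have hc0 : Continuous fun t : ℝ => |t - t0| :=
      continuous_abs.comp (continuous_id.sub (continuous_const (y := t0)))
    simpa using hc0.tendsto t0
  have hc : ContinuousAt (fun x : ℝ => x ^ q) 0 :=
    Real.continuousAt_rpow_const 0 q (Or.inr hq0.le)
  have h2 := hc.tendsto.comp h1
  rw [Real.zero_rpow hq0.ne'] at h2
  simpa using h2.const_mul 2

end VBE
namespace VBE

lemma hasDerivAt_abs_rpow {a : ℝ} (ha : 1 < a) (u : ℝ) :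
    HasDerivAt (fun t : ℝ => |t| ^ a) (a * phi (a - 1) u) u := by
  have ha0 : (0:ℝ) < a - 1 := by linarith
  rcases lt_trichotomy u 0 with hu | rfl | hu
  · -- u < 0
    have h0 : HasDerivAt (fun t : ℝ => -t) (-1) u := (hasDerivAt_id u).neg
    have h1 : HasDerivAt (fun x : ℝ => x ^ a) (a * (-u) ^ (a - 1)) (-u) :=
      Real.hasDerivAt_rpow_const (Or.inr ha.le)
    have h2 : HasDerivAt (fun t : ℝ => (-t) ^ a) (a * (-u) ^ (a - 1) * (-1)) u :=
      HasDerivAt.comp u h1 h0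
    have hval : a * (-u) ^ (a - 1) * (-1) = a * phi (a - 1) u := by
      rw [phi_of_nonpos ha0.ne' hu.le]; ring
    rw [hval] at h2
    refine h2.congr_of_eventuallyEq ?_
    filter_upwards [Iio_mem_nhds hu] with t ht
    rw [abs_of_neg ht]
  · -- u = 0
    rw [phi_zero, mul_zero]
    rw [hasDerivAt_iff_tendsto_slope]
    have hb : ∀ t : ℝ, t ≠ 0 → ‖slope (fun t : ℝ => |t| ^ a) 0 t‖ ≤ |t| ^ (a - 1) := by
      intro t ht
      have htp : (0:ℝ) < |t| := abs_pos.2 ht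
      rw [slope_def_field]
      have : (|t| ^ a - |(0:ℝ)| ^ a) / (t - 0) = |t| ^ a / t := by
        rw [abs_zero, Real.zero_rpow (by linarith : a ≠ 0), sub_zero, sub_zero]
      rw [this]
      have h2 : ‖|t| ^ a / t‖ = |t| ^ a / |t| := by
        rw [norm_div, Real.norm_eq_abs, Real.norm_eq_abs,
          abs_of_nonneg (Real.rpow_nonneg (abs_nonneg t) a)]
      rw [h2, Real.rpow_sub htp, Real.rpow_one]
    refine squeeze_zero_norm' (a := fun t : ℝ => |t| ^ (a - 1)) ?_ ?_
    · filter_upwards [self_mem_nhdsWithin] with t ht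
      exact hb t ht
    · have hc : ContinuousAt (fun x : ℝ => x ^ (a - 1)) 0 :=
        Real.continuousAt_rpow_const 0 (a - 1) (Or.inr ha0.le)
      have hc2 : Filter.Tendsto (fun t : ℝ => |t| ^ (a - 1)) (nhds 0) (nhds 0) := by
        have habs : Filter.Tendsto (abs : ℝ → ℝ) (nhds 0) (nhds 0) := by
          simpa using continuous_abs.tendsto (0:ℝ)
        have := hc.tendsto.comp habs
        simpa [Function.comp_def, Real.zero_rpow ha0.ne'] using this
      exact hc2.mono_left nhdsWithin_le_nhds
  · -- u > 0
    have h1 : HasDerivAt (fun x : ℝ => x ^ a) (a * u ^ (a - 1)) u :=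
      Real.hasDerivAt_rpow_const (Or.inr ha.le)
    have hval : a * u ^ (a - 1) = a * phi (a - 1) u := by
      rw [phi_of_pos hu]
    rw [hval] at h1
    refine h1.congr_of_eventuallyEq ?_
    filter_upwards [Ioi_mem_nhds hu] with t ht
    rw [abs_of_pos ht]

lemma key_ineq {a : ℝ} (ha1 : 1 ≤ a) (ha2 : a ≤ 2) (x y : ℝ) :
    |x + y| ^ a ≤ |x| ^ a + a * phi (a - 1) x * y + 2 * |y| ^ a := by
  rcases ha1.eq_or_lt with heq | hlt
  · -- a = 1
    subst heq
    simp only [Real.rpow_one, sub_self]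
    have hphi : phi 0 x = Real.sign x := by
      rcases eq_or_ne x 0 with rfl | hx
      · simp [phi_zero, Real.sign_zero]
      · rw [phi, Real.rpow_zero, mul_one]
    rw [hphi, one_mul]
    have hsy : -|y| ≤ Real.sign x * y := by
      rcases Real.sign_apply_eq x with h | h | h <;> rw [h] <;>
        cases' abs_cases y with hy hy <;> nlinarith
    have := abs_add_le x y
    linarith
  · -- 1 < a
    have ha0 : (0:ℝ) < a - 1 := by linarith
    have ha0' : a - 1 ≤ 1 := by linarith
    set g : ℝ → ℝ := fun t => a * phi (a - 1) t with hg
    have hg_cont : Continuous g :=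
      continuous_const.mul (phi_continuous ha0 ha0')
    have hbnd : Continuous fun t : ℝ => 2 * a * |t - x| ^ (a - 1) := by
      have : Continuous fun t : ℝ => |t - x| :=
        continuous_abs.comp (continuous_id.sub continuous_const)
      exact continuous_const.mul (this.rpow_const (fun t => Or.inr ha0.le))
    have FTC : ∫ t in x..(x + y), g t = |x + y| ^ a - |x| ^ a :=
      intervalIntegral.integral_eq_sub_of_hasDerivAt
        (fun t _ => hasDerivAt_abs_rpow hlt t)
        (hg_cont.intervalIntegrable _ _)
    have hsplit : |x + y| ^ a - |x| ^ a - a * phi (a - 1) x * y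
        = ∫ t in x..(x + y), (g t - g x) := by
      rw [intervalIntegral.integral_sub (hg_cont.intervalIntegrable _ _)
        (intervalIntegrable_const), FTC, intervalIntegral.integral_const]
      simp [hg]
      ring
    have hptbound : ∀ t : ℝ, g t - g x ≤ 2 * a * |t - x| ^ (a - 1) := by
      intro t
      have h1 := phi_holder ha0 ha0' t x
      have h2 : phi (a - 1) t - phi (a - 1) x ≤ 2 * |t - x| ^ (a - 1) :=
        (le_abs_self _).trans h1
      have ha' : (0:ℝ) < a := by linarith
      calc g t - g x = a * (phi (a - 1) t - phi (a - 1) x) := by rw [hg]; ring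
        _ ≤ a * (2 * |t - x| ^ (a - 1)) := by
            exact mul_le_mul_of_nonneg_left h2 ha'.le
        _ = 2 * a * |t - x| ^ (a - 1) := by ring
    have hptbound' : ∀ t : ℝ, g x - g t ≤ 2 * a * |t - x| ^ (a - 1) := by
      intro t
      have h1 := phi_holder ha0 ha0' x t
      have h2 : phi (a - 1) x - phi (a - 1) t ≤ 2 * |x - t| ^ (a - 1) :=
        (le_abs_self _).trans h1
      have ha' : (0:ℝ) < a := by linarith
      rw [abs_sub_comm x t] at h2
      calc g x - g t = a * (phi (a - 1) x - phi (a - 1) t) := by rw [hg]; ring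
        _ ≤ a * (2 * |t - x| ^ (a - 1)) := mul_le_mul_of_nonneg_left h2 ha'.le
        _ = 2 * a * |t - x| ^ (a - 1) := by ring
    have hmain : ∫ t in x..(x + y), (g t - g x) ≤ 2 * |y| ^ a := by
      rcases le_total 0 y with hy | hy
      · have hle : x ≤ x + y := by linarith
        have step1 : ∫ t in x..(x + y), (g t - g x)
            ≤ ∫ t in x..(x + y), 2 * a * |t - x| ^ (a - 1) := by
          refine intervalIntegral.integral_mono_on hle
            ((hg_cont.sub continuous_const).intervalIntegrable _ _)
            (hbnd.intervalIntegrable _ _) (fun t _ => hptbound t)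
        have step2 : ∫ t in x..(x + y), 2 * a * |t - x| ^ (a - 1) = 2 * |y| ^ a := by
          rw [intervalIntegral.integral_const_mul]
          have e1 : ∫ t in x..(x + y), |t - x| ^ (a - 1)
              = ∫ s in (0:ℝ)..y, |s| ^ (a - 1) := by
            have := intervalIntegral.integral_comp_sub_right
              (fun s : ℝ => |s| ^ (a - 1)) x (a := x) (b := x + y)
            simpa using this
          have e2 : ∫ s in (0:ℝ)..y, |s| ^ (a - 1) = ∫ s in (0:ℝ)..y, s ^ (a - 1) := by
            refine intervalIntegral.integral_congr (fun s hs => ?_)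
            rw [Set.uIcc_of_le hy] at hs
            rw [abs_of_nonneg hs.1]
          have e3 : ∫ s in (0:ℝ)..y, s ^ (a - 1) = y ^ a / a := by
            rw [integral_rpow (Or.inl (by linarith))]
            rw [sub_add_cancel, Real.zero_rpow (by linarith : a ≠ 0), sub_zero]
          rw [e1, e2, e3, abs_of_nonneg hy]
          field_simp
        linarith [step1, step2.le, step2.ge]
      · have hle : x + y ≤ x := by linarith
        have flip : ∫ t in x..(x + y), (g t - g x)
            = ∫ t in (x + y)..x, (g x - g t) := by
          rw [intervalIntegral.integral_symm (x + y) x, ← intervalIntegral.integral_neg]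
          simp only [neg_sub]
        have step1 : ∫ t in (x + y)..x, (g x - g t)
            ≤ ∫ t in (x + y)..x, 2 * a * |t - x| ^ (a - 1) := by
          refine intervalIntegral.integral_mono_on hle
            ((continuous_const.sub hg_cont).intervalIntegrable _ _)
            (hbnd.intervalIntegrable _ _) (fun t _ => hptbound' t)
        have step2 : ∫ t in (x + y)..x, 2 * a * |t - x| ^ (a - 1) = 2 * |y| ^ a := by
          rw [intervalIntegral.integral_const_mul]
          have e1 : ∫ t in (x + y)..x, |t - x| ^ (a - 1)
              = ∫ s in y..(0:ℝ), |s| ^ (a - 1) := by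
            have := intervalIntegral.integral_comp_sub_right
              (fun s : ℝ => |s| ^ (a - 1)) x (a := x + y) (b := x)
            simpa using this
          have e2 : ∫ s in y..(0:ℝ), |s| ^ (a - 1)
              = ∫ s in (0:ℝ)..(-y), |s| ^ (a - 1) := by
            have := intervalIntegral.integral_comp_neg (fun s : ℝ => |s| ^ (a - 1))
              (a := 0) (b := -y)
            simp only [abs_neg, neg_neg, neg_zero] at this
            exact this.symm
          have e3 : ∫ s in (0:ℝ)..(-y), |s| ^ (a - 1)
              = ∫ s in (0:ℝ)..(-y), s ^ (a - 1) := by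
            refine intervalIntegral.integral_congr (fun s hs => ?_)
            rw [Set.uIcc_of_le (by linarith : (0:ℝ) ≤ -y)] at hs
            rw [abs_of_nonneg hs.1]
          have e4 : ∫ s in (0:ℝ)..(-y), s ^ (a - 1) = (-y) ^ a / a := by
            rw [integral_rpow (Or.inl (by linarith))]
            rw [sub_add_cancel, Real.zero_rpow (by linarith : a ≠ 0), sub_zero]
          rw [e1, e2, e3, e4, abs_of_nonpos hy]
          field_simp
        rw [flip]
        linarith [step1, step2.le]
    linarith [hsplit ▸ hmain]

end VBE
namespace VBE

lemma measurable_sign : Measurable Real.sign := by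
  have h : Real.sign = fun r : ℝ => if r < 0 then (-1:ℝ) else if 0 < r then 1 else 0 := rfl
  rw [h]
  exact Measurable.ite measurableSet_Iio measurable_const
    (Measurable.ite measurableSet_Ioi measurable_const measurable_const)

lemma phi_measurable (q : ℝ) : Measurable (phi q) := by
  have : Measurable fun t : ℝ => |t| ^ q := by fun_prop
  exact measurable_sign.mul this

lemma abs_sign_le (t : ℝ) : |Real.sign t| ≤ 1 := by
  rcases Real.sign_apply_eq t with h | h | h <;> rw [h] <;> norm_num

lemma phi_abs_le {a : ℝ} (ha1 : 1 ≤ a) (t : ℝ) :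
    |phi (a - 1) t| ≤ 1 + |t| ^ a := by
  set q := a - 1 with hq
  have hq0 : (0:ℝ) ≤ q := by rw [hq]; linarith
  have hqa : q ≤ a := by rw [hq]; linarith
  have h1 : |phi q t| ≤ |t| ^ q := by
    rw [phi, abs_mul, abs_of_nonneg (Real.rpow_nonneg (abs_nonneg t) q)]
    have := abs_sign_le t
    nlinarith [Real.rpow_nonneg (abs_nonneg t) q]
  have h2 : |t| ^ q ≤ 1 + |t| ^ a := by
    rcases le_total |t| 1 with h | h
    · have := Real.rpow_le_one (abs_nonneg t) h hq0
      have := Real.rpow_nonneg (abs_nonneg t) a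
      linarith
    · have := Real.rpow_le_rpow_of_exponent_le h hqa
      linarith
  linarith

lemma abs_add_rpow_le {a : ℝ} (ha1 : 1 ≤ a) (x y : ℝ) :
    |x + y| ^ a ≤ 2 ^ a * (|x| ^ a + |y| ^ a) := by
  have ha0 : (0:ℝ) ≤ a := by linarith
  have h1 : |x + y| ^ a ≤ (|x| + |y|) ^ a :=
    Real.rpow_le_rpow (abs_nonneg _) (abs_add_le x y) ha0
  have hmax : |x| + |y| ≤ 2 * max |x| |y| := by
    rcases le_total |x| |y| with h | h
    · rw [max_eq_right h]; linarith
    · rw [max_eq_left h]; linarith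
  have hmax0 : (0:ℝ) ≤ max |x| |y| := le_max_of_le_left (abs_nonneg x)
  have h2 : (|x| + |y|) ^ a ≤ (2 * max |x| |y|) ^ a :=
    Real.rpow_le_rpow (by positivity) hmax ha0
  have h3 : (2 * max |x| |y|) ^ a = 2 ^ a * (max |x| |y|) ^ a :=
    Real.mul_rpow (by norm_num) hmax0
  have h4 : (max |x| |y|) ^ a ≤ |x| ^ a + |y| ^ a := by
    rcases max_cases |x| |y| with ⟨h, _⟩ | ⟨h, _⟩ <;> rw [h]
    · have := Real.rpow_nonneg (abs_nonneg y) a; linarith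
    · have := Real.rpow_nonneg (abs_nonneg x) a; linarith
  have h5 : (0:ℝ) ≤ 2 ^ a := Real.rpow_nonneg (by norm_num) a
  calc |x + y| ^ a ≤ (2 * max |x| |y|) ^ a := h1.trans h2
    _ = 2 ^ a * (max |x| |y|) ^ a := h3
    _ ≤ 2 ^ a * (|x| ^ a + |y| ^ a) := mul_le_mul_of_nonneg_left h4 h5

variable {Ω : Type*} [MeasurableSpace Ω]

lemma step (μ : Measure Ω) [IsProbabilityMeasure μ]
    {a : ℝ} (ha1 : 1 ≤ a) (ha2 : a ≤ 2)
    {X Y : Ω → ℝ} (hX : Measurable X) (hY : Measurable Y)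
    (hXY : IndepFun X Y μ)
    (hXa : Integrable (fun ω => |X ω| ^ a) μ)
    (hYa : Integrable (fun ω => |Y ω| ^ a) μ)
    (hYint : Integrable Y μ) (hYcen : ∫ ω, Y ω ∂μ = 0) :
    Integrable (fun ω => |X ω + Y ω| ^ a) μ ∧
      ∫ ω, |X ω + Y ω| ^ a ∂μ ≤ ∫ ω, |X ω| ^ a ∂μ + 2 * ∫ ω, |Y ω| ^ a ∂μ := by
  have ha0 : (0:ℝ) < a := by linarith
  -- integrability of |X+Y|^a
  have hmeas_sum : Measurable fun ω => |X ω + Y ω| ^ a := by fun_prop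
  have hint_sum : Integrable (fun ω => |X ω + Y ω| ^ a) μ := by
    refine Integrable.mono' (((hXa.add hYa).const_mul (2 ^ a))) hmeas_sum.aestronglyMeasurable
      (Filter.Eventually.of_forall fun ω => ?_)
    rw [Real.norm_eq_abs, abs_of_nonneg (Real.rpow_nonneg (abs_nonneg _) a)]
    exact abs_add_rpow_le ha1 (X ω) (Y ω)
  refine ⟨hint_sum, ?_⟩
  -- middle term
  set g : ℝ → ℝ := fun t => a * phi (a - 1) t with hg
  have hgmeas : Measurable g := (phi_measurable (a - 1)).const_mul a
  have hgX_int : Integrable (fun ω => g (X ω)) μ := by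
    refine Integrable.mono' (((integrable_const (1:ℝ)).add hXa).const_mul a)
      (hgmeas.comp hX).aestronglyMeasurable (Filter.Eventually.of_forall fun ω => ?_)
    rw [Real.norm_eq_abs, hg]
    simp only
    rw [abs_mul, abs_of_nonneg ha0.le]
    exact mul_le_mul_of_nonneg_left (phi_abs_le ha1 (X ω)) ha0.le
  have hindep_g : IndepFun (fun ω => g (X ω)) Y μ := hXY.comp hgmeas measurable_id
  have hmid_int : Integrable (fun ω => g (X ω) * Y ω) μ := by
    have := hindep_g.integrable_mul hgX_int hYint
    exact this
  have hmid_zero : ∫ ω, g (X ω) * Y ω ∂μ = 0 := by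
    rw [hindep_g.integral_fun_mul_eq_mul_integral (hgmeas.comp hX).aestronglyMeasurable
      hY.aestronglyMeasurable]
    rw [show integral μ Y = ∫ ω, Y ω ∂μ from rfl, hYcen, mul_zero]
  -- pointwise bound and conclude
  have hptwise : ∀ ω, |X ω + Y ω| ^ a ≤ |X ω| ^ a + g (X ω) * Y ω + 2 * |Y ω| ^ a := by
    intro ω
    have := key_ineq ha1 ha2 (X ω) (Y ω)
    simpa [hg, mul_assoc] using this
  have hRHS_int : Integrable
      (fun ω => |X ω| ^ a + g (X ω) * Y ω + 2 * |Y ω| ^ a) μ :=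
    (hXa.add hmid_int).add (hYa.const_mul 2)
  have hle := integral_mono hint_sum hRHS_int hptwise
  have hAB : Integrable (fun ω => |X ω| ^ a + g (X ω) * Y ω) μ := hXa.add hmid_int
  have hC : Integrable (fun ω => 2 * |Y ω| ^ a) μ := hYa.const_mul 2
  rw [integral_add hAB hC, integral_add hXa hmid_int, hmid_zero,
    integral_const_mul] at hle
  linarith

end VBE

open VBE in
theorem stmt10 {Ω : Type*} [MeasurableSpace Ω] (μ : Measure Ω) [IsProbabilityMeasure μ]
    (k : ℕ) (ξ : Fin k → Ω → ℝ)
    (hm : ∀ i, Measurable (ξ i))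
    (a : ℝ) (ha1 : 1 ≤ a) (ha2 : a ≤ 2)
    (hi : ∀ i, Integrable (fun ω => |ξ i ω| ^ a) μ)
    (hint : ∀ i, Integrable (ξ i) μ)
    (hcen : ∀ i, ∫ ω, ξ i ω ∂μ = 0)
    (hind : iIndepFun ξ μ) :
    ∫ ω, |∑ i, ξ i ω| ^ a ∂μ ≤ 2 * ∑ i, ∫ ω, |ξ i ω| ^ a ∂μ := by
  have ha0 : a ≠ 0 := by linarith
  have main : ∀ s : Finset (Fin k),
      Integrable (fun ω => |∑ i ∈ s, ξ i ω| ^ a) μ ∧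
      ∫ ω, |∑ i ∈ s, ξ i ω| ^ a ∂μ ≤ 2 * ∑ i ∈ s, ∫ ω, |ξ i ω| ^ a ∂μ := by
    intro s
    induction s using Finset.induction_on with
    | empty =>
      constructor
      · simpa [Real.zero_rpow ha0] using (integrable_const (0:ℝ))
      · simp [Real.zero_rpow ha0]
    | @insert j s hjs ih =>
      have hXmeas : Measurable fun ω => ∑ i ∈ s, ξ i ω :=
        Finset.measurable_sum s (fun i _ => hm i)
      have hsum_eq : (∑ i ∈ s, ξ i) = fun ω => ∑ i ∈ s, ξ i ω := by
        funext ω; simp [Finset.sum_apply]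
      have hindep : IndepFun (fun ω => ∑ i ∈ s, ξ i ω) (ξ j) μ := by
        have := hind.indepFun_finsetSum_of_notMem hm hjs
        rwa [hsum_eq] at this
      obtain ⟨ih_int, ih_le⟩ := ih
      obtain ⟨h_int, h_le⟩ :=
        step μ ha1 ha2 hXmeas (hm j) hindep ih_int (hi j) (hint j) (hcen j)
      have hfun : (fun ω => |∑ i ∈ insert j s, ξ i ω| ^ a)
          = fun ω => |(∑ i ∈ s, ξ i ω) + ξ j ω| ^ a := by
        funext ω
        rw [Finset.sum_insert hjs, add_comm]
      constructor
      · rw [hfun]; exact h_int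
      · have hintg : ∫ ω, |∑ i ∈ insert j s, ξ i ω| ^ a ∂μ
            = ∫ ω, |(∑ i ∈ s, ξ i ω) + ξ j ω| ^ a ∂μ := by rw [hfun]
        rw [hintg, Finset.sum_insert hjs]
        linarith
  obtain ⟨_, h⟩ := main Finset.univ
  simpa using h
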